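/- Suppose a linear differential equation x^k F_0(x)u^{(p)} + x^{k−1}F_1(x)u^{(p−1)} + F_2(x)u^{(p−2)} + ... + F_p(x)u = 0 with polynomial coefficients, F_0(0) ≠ 0, F_1(0) ≠ 0, k ≥ 2, has solutions of the form x^i f_i(x) with f_i(0) ≠ 0 for each i = 0, 1, ..., p−2. Then F_2(0) = F_3(0) = ... = F_p(0) = 0. -/
import Mathlib


open Polynomial

lemma eval_zero_iterate_derivative (q : Polynomial ℂ) (m : ℕ) :
    Polynomial.eval 0 ((⇑Polynomial.derivative)^[m] q) = (m.factorial : ℂ) * q.coeff m := by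
  rw [← Polynomial.coeff_zero_eq_eval_zero, Polynomial.coeff_iterate_derivative]
  simp [Nat.descFactorial_self, nsmul_eq_mul]

/-- If the equation `x^k F₀u^{(p)} + x^{k−1}F₁u^{(p−1)} + F₂u^{(p−2)} + … + F_pu = 0` with
`F₀(0) ≠ 0`, `F₁(0) ≠ 0`, `k ≥ 2`, has solutions `x^i·fᵢ(x)` with `fᵢ(0) ≠ 0` for each
`i = 0,…,p−2`, then `F₂(0) = … = F_p(0) = 0`. -/
theorem stmt15 (p k : ℕ) (hp : 2 ≤ p) (hk : 2 ≤ k)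
    (F : ℕ → Polynomial ℂ)
    (hF0 : (F 0).eval 0 ≠ 0) (hF1 : (F 1).eval 0 ≠ 0)
    (f : ℕ → Polynomial ℂ)
    (hf : ∀ i, i ≤ p - 2 → (f i).eval 0 ≠ 0)
    (hsol : ∀ i, i ≤ p - 2 →
      X ^ k * F 0 * (⇑Polynomial.derivative)^[p] (X ^ i * f i) +
        X ^ (k - 1) * F 1 * (⇑Polynomial.derivative)^[p - 1] (X ^ i * f i) +
        ∑ j ∈ Finset.Icc 2 p, F j * (⇑Polynomial.derivative)^[p - j] (X ^ i * f i) = 0) :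
    ∀ j, 2 ≤ j → j ≤ p → (F j).eval 0 = 0 := by
  have key : ∀ i, i ≤ p - 2 →
      ∑ j ∈ Finset.Icc 2 p, (F j).eval 0 *
        (((p - j).factorial : ℂ) * (X ^ i * f i).coeff (p - j)) = 0 := by
    intro i hi
    have h0 := congrArg (Polynomial.eval 0) (hsol i hi)
    simp only [Polynomial.eval_add, Polynomial.eval_mul, Polynomial.eval_pow,
      Polynomial.eval_X, Polynomial.eval_finset_sum, Polynomial.eval_zero,
      zero_pow (show k ≠ 0 by omega), zero_pow (show k - 1 ≠ 0 by omega),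
      zero_mul, zero_add, eval_zero_iterate_derivative] at h0
    exact h0
  intro j
  induction j using Nat.strong_induction_on with
  | _ j ih =>
    intro h2 hjp
    have hi : p - j ≤ p - 2 := by omega
    have h := key (p - j) hi
    rw [Finset.sum_eq_single j] at h
    · have hc : (X ^ (p - j) * f (p - j)).coeff (p - j) = (f (p - j)).eval 0 := by
        have := Polynomial.coeff_X_pow_mul (f (p - j)) (p - j) 0
        simp only [zero_add] at this
        rw [this, Polynomial.coeff_zero_eq_eval_zero]
      rw [hc] at h
      have hfac : ((p - j).factorial : ℂ) ≠ 0 := Nat.cast_ne_zero.mpr (Nat.factorial_ne_zero _)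
      have hfne := hf (p - j) hi
      rcases mul_eq_zero.mp h with h' | h'
      · exact h'
      · rcases mul_eq_zero.mp h' with h'' | h''
        · exact absurd h'' hfac
        · exact absurd h'' hfne
    · intro b hb hbj
      simp only [Finset.mem_Icc] at hb
      rcases lt_or_gt_of_ne hbj with hlt | hgt
      · rw [ih b hlt hb.1 hb.2, zero_mul]
      · have hc0 : (X ^ (p - j) * f (p - j)).coeff (p - b) = 0 := by
          rw [mul_comm, Polynomial.coeff_mul_X_pow']
          rw [if_neg (by omega)]
        rw [hc0, mul_zero, mul_zero]
    · intro hj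
      simp only [Finset.mem_Icc] at hj
      omega
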